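/- Let G be a partial cube with Θ-classes E_1, ..., E_d. For each i, let U_i, U_i' be the two components of G - E_i; for i ≠ j and k,l ∈ {0,1} let m_ij^{kl} be the number of edges in the intersection of the corresponding components (m^{11} = |E(U_i) ∩ E(U_j)|, etc.). Then the edge-hyper-Wiener index satisfies WW_e(G) = 2 W_e(G) + Σ_{1 ≤ i < j ≤ d} ( m_ij^{11} m_ij^{00} + m_ij^{10} m_ij^{01} ) − C(|E(G)|, 2). -/

import Mathlib

open SimpleGraph
open scoped Classical

/-- The hypercube graph `Q_n`: vertices are 0-1 `n`-tuples, adjacent iff they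
differ in exactly one coordinate. -/
def cubeGraph (n : ℕ) : SimpleGraph (Fin n → Bool) where
  Adj x y := ∃! i, x i ≠ y i
  symm := by
    constructor
    rintro x y ⟨i, hi, hu⟩
    exact ⟨i, Ne.symm hi, fun j hj => hu j (Ne.symm hj)⟩
  loopless := by
    constructor
    rintro x ⟨i, hi, -⟩
    exact hi rfl

open Finset

lemma cube_adj_hamming {n : ℕ} {x y : Fin n → Bool} (h : (cubeGraph n).Adj x y) :
    hammingDist x y = 1 := by
  obtain ⟨i, hi, hu⟩ := h
  rw [hammingDist, Finset.card_eq_one]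
  exact ⟨i, Finset.eq_singleton_iff_unique_mem.2
    ⟨by simpa using hi, fun j hj => hu j (by simpa using hj)⟩⟩

lemma cube_exists_walk {n : ℕ} : ∀ (k : ℕ) (x y : Fin n → Bool),
    hammingDist x y = k → ∃ w : (cubeGraph n).Walk x y, w.length = k := by
  intro k
  induction k with
  | zero =>
    intro x y h
    rw [hammingDist_eq_zero] at h
    subst h
    exact ⟨SimpleGraph.Walk.nil, rfl⟩
  | succ k ih =>
    intro x y h
    have hne : x ≠ y := by
      intro he; subst he; simp [hammingDist_self] at h
    obtain ⟨i, hi⟩ : ∃ i, x i ≠ y i := by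
      by_contra hc; push_neg at hc; exact hne (funext hc)
    set x' : Fin n → Bool := Function.update x i (y i) with hx'
    have hadj : (cubeGraph n).Adj x x' := by
      refine ⟨i, by simp [hx', hi], fun j hj => ?_⟩
      by_contra hji
      exact hj (by rw [hx', Function.update_of_ne hji])
    have hfil : ({j | x' j ≠ y j} : Finset (Fin n)) = ({j | x j ≠ y j} : Finset (Fin n)).erase i := by
      ext j
      rcases eq_or_ne j i with rfl | hj
      · simp [hx']
      · simp [hx', Function.update_of_ne hj, hj]
    have hh : hammingDist x' y = k := by
      rw [hammingDist, hfil, Finset.card_erase_of_mem (by simpa using hi)]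
      rw [hammingDist] at h
      omega
    obtain ⟨w, hw⟩ := ih x' y hh
    exact ⟨SimpleGraph.Walk.cons hadj w, by simp [hw]⟩

lemma cube_hamming_le_length {n : ℕ} {x y : Fin n → Bool} (w : (cubeGraph n).Walk x y) :
    hammingDist x y ≤ w.length := by
  induction w with
  | nil => simp [hammingDist_self]
  | @cons a b c h w ih =>
    have h1 : hammingDist a b = 1 := cube_adj_hamming h
    calc hammingDist a c ≤ hammingDist a b + hammingDist b c := hammingDist_triangle _ _ _
    _ ≤ 1 + w.length := by omega
    _ = (SimpleGraph.Walk.cons h w).length := by simp [Nat.add_comm]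

lemma cube_dist_eq {n : ℕ} (x y : Fin n → Bool) :
    (cubeGraph n).dist x y = hammingDist x y := by
  obtain ⟨w, hw⟩ := cube_exists_walk (hammingDist x y) x y rfl
  refine le_antisymm (hw ▸ SimpleGraph.dist_le w) ?_
  obtain ⟨w', hw'⟩ := SimpleGraph.Reachable.exists_walk_length_eq_dist ⟨w⟩
  calc hammingDist x y ≤ w'.length := cube_hamming_le_length w'
  _ = _ := hw'

/-- A partial cube: a connected graph isometrically embeddable into some hypercube. -/
def IsPartialCube {V : Type*} (G : SimpleGraph V) : Prop :=
  G.Connected ∧ ∃ (n : ℕ) (φ : V → (Fin n → Bool)),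
    ∀ u v : V, (cubeGraph n).dist (φ u) (φ v) = G.dist u v

/-- The Djoković–Winkler relation `Θ`. -/
def theta {V : Type*} (G : SimpleGraph V) (e f : Sym2 V) : Prop :=
  ∃ u₁ v₁ u₂ v₂ : V, e = s(u₁, v₁) ∧ f = s(u₂, v₂) ∧
    G.dist u₁ u₂ + G.dist v₁ v₂ ≠ G.dist u₁ v₂ + G.dist v₁ u₂

/-- The edges of `G` having all endpoints inside the vertex set `s`. -/
def edgesWithin {V : Type*} (G : SimpleGraph V) (s : Set V) : Set (Sym2 V) :=
  {e ∈ G.edgeSet | ∀ x ∈ e, x ∈ s}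

/-- The set of coordinates on which `φ` is not constant on `e`. -/
noncomputable def DD {V : Type*} {n : ℕ} (φ : V → Fin n → Bool) (e : Sym2 V) : Finset (Fin n) :=
  Finset.univ.filter fun q => ∃ x ∈ e, ∃ y ∈ e, φ x q ≠ φ y q

lemma DD_mk {V : Type*} {n : ℕ} (φ : V → Fin n → Bool) (u v : V) :
    DD φ s(u, v) = Finset.univ.filter fun q => φ u q ≠ φ v q := by
  ext q
  simp only [DD, Finset.mem_filter, Finset.mem_univ, true_and, Sym2.mem_iff]
  constructor
  · rintro ⟨x, hx, y, hy, hxy⟩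
    rcases hx with rfl | rfl <;> rcases hy with rfl | rfl
    · exact absurd rfl hxy
    · exact hxy
    · exact Ne.symm hxy
    · exact absurd rfl hxy
  · intro h; exact ⟨u, Or.inl rfl, v, Or.inr rfl, h⟩

lemma hamming_four {n : ℕ} (A B A' B' : Fin n → Bool) (pe pf : Fin n)
    (hAB : ∀ q, A q ≠ B q ↔ q = pe) (hA'B' : ∀ q, A' q ≠ B' q ↔ q = pf) :
    (hammingDist A A' + hammingDist B B' ≠ hammingDist A B' + hammingDist B A') ↔ pe = pf := by
  have hsum : ∀ X Y : Fin n → Bool, hammingDist X Y = ∑ q, if X q ≠ Y q then 1 else 0 := by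
    intro X Y; rw [hammingDist, Finset.card_filter]
  set f : Fin n → ℕ := fun q => (if A q ≠ A' q then 1 else 0) + (if B q ≠ B' q then 1 else 0)
  set g : Fin n → ℕ := fun q => (if A q ≠ B' q then 1 else 0) + (if B q ≠ A' q then 1 else 0)
  have hL : hammingDist A A' + hammingDist B B' = ∑ q, f q := by
    rw [hsum, hsum, ← Finset.sum_add_distrib]
  have hR : hammingDist A B' + hammingDist B A' = ∑ q, g q := by
    rw [hsum, hsum, ← Finset.sum_add_distrib]
  rw [hL, hR]
  have key : ∀ a b c d : Bool, a = b ∨ c = d →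
      ((if a ≠ c then 1 else 0) + (if b ≠ d then 1 else 0) : ℕ) =
        (if a ≠ d then 1 else 0) + (if b ≠ c then 1 else 0) := by decide
  constructor
  · -- if pe ≠ pf then sums are equal
    intro hne
    by_contra hpp
    apply hne
    apply Finset.sum_congr rfl
    intro q _
    rcases eq_or_ne q pe with rfl | hq
    · have h2 : A' q = B' q := by
        by_contra hc
        exact hpp ((hA'B' q).1 hc)
      exact key _ _ _ _ (Or.inr h2)
    · have h1 : A q = B q := by
        by_contra hc; exact hq ((hAB q).1 hc)
      exact key _ _ _ _ (Or.inl h1)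
  · -- if pe = pf the sums differ
    rintro rfl
    have hrest : ∀ q ∈ (Finset.univ.erase pe), f q = g q := by
      intro q hq
      have hq' : q ≠ pe := (Finset.mem_erase.1 hq).1
      have h1 : A q = B q := by
        by_contra hc; exact hq' ((hAB q).1 hc)
      simp only [f, g, h1]
      omega
    have hA1 : A pe ≠ B pe := (hAB pe).2 rfl
    have hA2 : A' pe ≠ B' pe := (hA'B' pe).2 rfl
    have hfg : f pe ≠ g pe ∧ (f pe = 0 ∧ g pe = 2 ∨ f pe = 2 ∧ g pe = 0) := by
      simp only [f, g]
      revert hA1 hA2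
      rcases Bool.eq_false_or_eq_true (A pe) with h | h <;>
        rcases Bool.eq_false_or_eq_true (B pe) with h2 | h2 <;>
        rcases Bool.eq_false_or_eq_true (A' pe) with h3 | h3 <;>
        rcases Bool.eq_false_or_eq_true (B' pe) with h4 | h4 <;>
        simp [h, h2, h3, h4]
    have e1 : ∑ q, f q = f pe + ∑ q ∈ Finset.univ.erase pe, f q :=
      (Finset.add_sum_erase _ f (Finset.mem_univ pe)).symm
    have e2 : ∑ q, g q = g pe + ∑ q ∈ Finset.univ.erase pe, g q :=
      (Finset.add_sum_erase _ g (Finset.mem_univ pe)).symm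
    have e3 : ∑ q ∈ Finset.univ.erase pe, f q = ∑ q ∈ Finset.univ.erase pe, g q :=
      Finset.sum_congr rfl hrest
    rw [e1, e2, e3]
    omega

lemma edge_flip {V : Type*} {G : SimpleGraph V} {n : ℕ} {φ : V → Fin n → Bool}
    (hφ : ∀ u v, hammingDist (φ u) (φ v) = G.dist u v) {u v : V} (h : G.Adj u v) :
    ∃ pq, ∀ q, φ u q ≠ φ v q ↔ q = pq := by
  have h1 : (Finset.univ.filter fun i => φ u i ≠ φ v i).card = 1 :=
    (hφ u v).trans (SimpleGraph.dist_eq_one_iff_adj.2 h)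
  obtain ⟨pq, hpq⟩ := Finset.card_eq_one.1 h1
  refine ⟨pq, fun q => ⟨fun hq => ?_, fun hq => ?_⟩⟩
  · have hmem : q ∈ Finset.univ.filter fun i => φ u i ≠ φ v i :=
      Finset.mem_filter.2 ⟨Finset.mem_univ _, hq⟩
    rw [hpq] at hmem
    exact Finset.mem_singleton.1 hmem
  · subst hq
    have hmem : q ∈ Finset.univ.filter fun i => φ u i ≠ φ v i := by
      rw [hpq]; exact Finset.mem_singleton_self _
    exact (Finset.mem_filter.1 hmem).2

lemma theta_iff_DD {V : Type*} {G : SimpleGraph V} {n : ℕ} {φ : V → Fin n → Bool}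
    (hφ : ∀ u v, hammingDist (φ u) (φ v) = G.dist u v) {e f : Sym2 V}
    (he : e ∈ G.edgeSet) (hf : f ∈ G.edgeSet) :
    theta G e f ↔ DD φ e = DD φ f := by
  induction e using Sym2.ind with | _ u₁ v₁ => ?_
  induction f using Sym2.ind with | _ u₂ v₂ => ?_
  rw [SimpleGraph.mem_edgeSet] at he hf
  obtain ⟨pe, hpe⟩ := edge_flip hφ he
  obtain ⟨pf, hpf⟩ := edge_flip hφ hf
  have hDe : DD φ s(u₁, v₁) = {pe} := by
    rw [DD_mk]; ext q; simp [hpe q]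
  have hDf : DD φ s(u₂, v₂) = {pf} := by
    rw [DD_mk]; ext q; simp [hpf q]
  rw [hDe, hDf]
  have key : (G.dist u₁ u₂ + G.dist v₁ v₂ ≠ G.dist u₁ v₂ + G.dist v₁ u₂) ↔ pe = pf := by
    rw [← hφ, ← hφ, ← hφ, ← hφ]
    exact hamming_four (φ u₁) (φ v₁) (φ u₂) (φ v₂) pe pf hpe hpf
  constructor
  · rintro ⟨a₁, b₁, a₂, b₂, h1, h2, h3⟩
    -- reinterpret via our fixed representatives
    have hpe' : ∀ q, φ a₁ q ≠ φ b₁ q ↔ q = pe := by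
      rcases Sym2.eq_iff.1 h1 with ⟨rfl, rfl⟩ | ⟨rfl, rfl⟩
      · exact hpe
      · intro q; rw [ne_comm]; exact hpe q
    have hpf' : ∀ q, φ a₂ q ≠ φ b₂ q ↔ q = pf := by
      rcases Sym2.eq_iff.1 h2 with ⟨rfl, rfl⟩ | ⟨rfl, rfl⟩
      · exact hpf
      · intro q; rw [ne_comm]; exact hpf q
    have : pe = pf := by
      rw [← hamming_four (φ a₁) (φ b₁) (φ a₂) (φ b₂) pe pf hpe' hpf']
      rw [hφ, hφ, hφ, hφ]
      exact h3
    simp [this]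
  · intro hh
    have : pe = pf := by simpa using hh
    exact ⟨u₁, v₁, u₂, v₂, rfl, rfl, key.2 this⟩

lemma bool_eq_of_ne_ne : ∀ a b c : Bool, a ≠ b → a ≠ c → b = c := by decide

lemma hamming_step {n : ℕ} {A C B : Fin n → Bool} {q : Fin n}
    (hAC : ∀ r, A r ≠ C r ↔ r = q) (hlen : hammingDist C B + 1 = hammingDist A B) :
    A q ≠ B q ∧ ∀ r, C r ≠ B r ↔ A r ≠ B r ∧ r ≠ q := by
  have hACq : A q ≠ C q := (hAC q).2 rfl
  have hsame : ∀ r, r ≠ q → A r = C r := fun r hr => by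
    by_contra hc; exact hr ((hAC r).1 hc)
  have hq : A q ≠ B q := by
    by_contra hc
    have hfil : (Finset.univ.filter fun r => C r ≠ B r)
        = insert q (Finset.univ.filter fun r => A r ≠ B r) := by
      ext r
      rcases eq_or_ne r q with rfl | hr
      · constructor
        · intro _; exact Finset.mem_insert_self _ _
        · intro _
          exact Finset.mem_filter.2 ⟨Finset.mem_univ _,
            fun hCB => hACq (hc.trans hCB.symm)⟩
      · constructor
        · intro hm
          refine Finset.mem_insert_of_mem (Finset.mem_filter.2 ⟨Finset.mem_univ _, ?_⟩)
          have := (Finset.mem_filter.1 hm).2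
          rwa [hsame r hr]
        · intro hm
          rcases Finset.mem_insert.1 hm with rfl | hm'
          · exact absurd rfl hr
          · refine Finset.mem_filter.2 ⟨Finset.mem_univ _, ?_⟩
            have := (Finset.mem_filter.1 hm').2
            rwa [← hsame r hr]
    have hqnot : q ∉ Finset.univ.filter fun r => A r ≠ B r := by
      simp [hc]
    have hCBcard : hammingDist C B = (Finset.univ.filter fun r => C r ≠ B r).card := rfl
    have hABcard : hammingDist A B = (Finset.univ.filter fun r => A r ≠ B r).card := rfl
    rw [hCBcard, hABcard, hfil, Finset.card_insert_of_notMem hqnot] at hlen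
    omega
  refine ⟨hq, fun r => ?_⟩
  rcases eq_or_ne r q with rfl | hr
  · have hCB : C r = B r := bool_eq_of_ne_ne _ _ _ hACq hq
    simp [hCB]
  · rw [← hsame r hr]
    simp [hr]

section GeodesicInduction

variable {V : Type*} {G : SimpleGraph V} {n : ℕ} {φ : V → Fin n → Bool} {d : ℕ}
  {p : Fin d → Fin n}

lemma exists_geodesic_step (hconn : G.Connected) {u v : V} (huv : u ≠ v) :
    ∃ z, G.Adj u z ∧ G.dist z v + 1 = G.dist u v := by
  have h0 : 0 < G.dist u v := hconn.pos_dist_of_ne huv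
  obtain ⟨w, hw⟩ := hconn.exists_walk_length_eq_dist u v
  cases w with
  | nil => exact absurd rfl huv
  | @cons _ z _ h w' =>
    refine ⟨z, h, ?_⟩
    have h1 : G.dist z v ≤ w'.length := SimpleGraph.dist_le w'
    have h2 : G.dist u v ≤ G.dist u z + G.dist z v := hconn.dist_triangle
    have h3 : G.dist u z ≤ 1 := by
      rw [SimpleGraph.dist_eq_one_iff_adj.2 h]
    have h4 : w'.length + 1 = G.dist u v := by simpa using hw
    omega

lemma coord_active (hconn : G.Connected)
    (hφ : ∀ u v, hammingDist (φ u) (φ v) = G.dist u v)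
    (hcls : ∀ u v, G.Adj u v → ∃ i : Fin d, ∀ r, φ u r ≠ φ v r ↔ r = p i) :
    ∀ (k : ℕ) (u v : V), G.dist u v = k → ∀ q, φ u q ≠ φ v q → ∃ i, q = p i := by
  intro k
  induction k using Nat.strong_induction_on with
  | _ k ih =>
    intro u v hk q hq
    have huv : u ≠ v := fun h => hq (h ▸ rfl)
    obtain ⟨z, hadj, hz⟩ := exists_geodesic_step hconn huv
    obtain ⟨i0, hi0⟩ := hcls u z hadj
    have hlen : hammingDist (φ z) (φ v) + 1 = hammingDist (φ u) (φ v) := by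
      rw [hφ, hφ, hz]
    obtain ⟨h1, h2⟩ := hamming_step hi0 hlen
    rcases eq_or_ne q (p i0) with rfl | hqi
    · exact ⟨i0, rfl⟩
    · have hq' : φ z q ≠ φ v q := (h2 q).2 ⟨hq, hqi⟩
      have hlt : G.dist z v < k := by omega
      exact ih (G.dist z v) hlt z v rfl q hq'

lemma same_coord_reach (hconn : G.Connected)
    (hφ : ∀ u v, hammingDist (φ u) (φ v) = G.dist u v)
    (hcls : ∀ u v, G.Adj u v → ∃ i : Fin d, ∀ r, φ u r ≠ φ v r ↔ r = p i)
    {S : Set (Sym2 V)} {c : Fin n}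
    (hmem : ∀ u v, G.Adj u v → s(u, v) ∈ S → ∀ r, φ u r ≠ φ v r ↔ r = c) :
    ∀ (k : ℕ) (u v : V), G.dist u v = k → φ u c = φ v c →
      (G.deleteEdges S).Reachable u v := by
  intro k
  induction k using Nat.strong_induction_on with
  | _ k ih =>
    intro u v hk hc
    rcases eq_or_ne u v with rfl | huv
    · exact SimpleGraph.Reachable.refl u
    obtain ⟨z, hadj, hz⟩ := exists_geodesic_step hconn huv
    obtain ⟨i0, hi0⟩ := hcls u z hadj
    have hlen : hammingDist (φ z) (φ v) + 1 = hammingDist (φ u) (φ v) := by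
      rw [hφ, hφ, hz]
    obtain ⟨h1, h2⟩ := hamming_step hi0 hlen
    have hpc : p i0 ≠ c := by
      rintro rfl
      exact h1 hc
    have hnotS : s(u, z) ∉ S := by
      intro hS
      have := (hmem u z hadj hS (p i0)).1 ((hi0 (p i0)).2 rfl)
      exact hpc this
    have hadj' : (G.deleteEdges S).Adj u z := by
      rw [SimpleGraph.deleteEdges_adj]
      exact ⟨hadj, hnotS⟩
    have hzc : φ z c = φ v c := by
      have : φ u c = φ z c := by
        by_contra hcon
        exact hpc ((hi0 c).1 hcon).symm
      rw [← this]; exact hc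
    have hlt : G.dist z v < k := by omega
    exact hadj'.reachable.trans (ih (G.dist z v) hlt z v rfl hzc)

lemma reach_same_coord {S : Set (Sym2 V)} {c : Fin n}
    (hsafe : ∀ u v, G.Adj u v → s(u, v) ∉ S → φ u c = φ v c)
    {u v : V} (h : (G.deleteEdges S).Reachable u v) : φ u c = φ v c := by
  obtain ⟨w⟩ := h
  induction w with
  | nil => rfl
  | @cons a b _ hab _ ih =>
    rw [SimpleGraph.deleteEdges_adj] at hab
    exact (hsafe a b hab.1 hab.2).trans ih

lemma dist_eq_card_sep (hconn : G.Connected)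
    (hφ : ∀ u v, hammingDist (φ u) (φ v) = G.dist u v)
    (hcls : ∀ u v, G.Adj u v → ∃ i : Fin d, ∀ r, φ u r ≠ φ v r ↔ r = p i)
    (hpinj : Function.Injective p) (u v : V) :
    G.dist u v = (Finset.univ.filter fun i => φ u (p i) ≠ φ v (p i)).card := by
  rw [← hφ]
  have him : (Finset.univ.filter fun q => φ u q ≠ φ v q)
      = (Finset.univ.filter fun i : Fin d => φ u (p i) ≠ φ v (p i)).image p := by
    ext q
    simp only [Finset.mem_filter, Finset.mem_univ, true_and, Finset.mem_image]
    constructor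
    · intro hq
      obtain ⟨i, rfl⟩ := coord_active hconn hφ hcls (G.dist u v) u v rfl q hq
      exact ⟨i, hq, rfl⟩
    · rintro ⟨i, hi, rfl⟩
      exact hi
  have : hammingDist (φ u) (φ v) = (Finset.univ.filter fun q => φ u q ≠ φ v q).card := rfl
  rw [this, him, Finset.card_image_of_injective _ hpinj]

end GeodesicInduction

section LineWalk

variable {V : Type*} {G : SimpleGraph V}

lemma lineWalk_of_walk :
    ∀ {x y : V} (w : G.Walk x y) (e f : G.edgeSet), x ∈ (e : Sym2 V) → y ∈ (f : Sym2 V) →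
      ∃ q : G.lineGraph.Walk e f, q.length ≤ w.length + 1 := by
  intro x y w
  induction w with
  | nil =>
    intro e f hx hy
    rcases eq_or_ne e f with rfl | hne
    · exact ⟨SimpleGraph.Walk.nil, by simp⟩
    · have hadj : G.lineGraph.Adj e f := lineGraph_adj_iff_exists.2 ⟨hne, _, hx, hy⟩
      exact ⟨SimpleGraph.Walk.cons hadj SimpleGraph.Walk.nil, by simp⟩
  | @cons x z y h w' ih =>
    intro e f hx hy
    have hg : s(x, z) ∈ G.edgeSet := h
    obtain ⟨q', hq'⟩ := ih ⟨s(x, z), hg⟩ f (Sym2.mem_mk_right x z) hy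
    rcases eq_or_ne e ⟨s(x, z), hg⟩ with rfl | hne
    · refine ⟨q', ?_⟩
      simp only [SimpleGraph.Walk.length_cons]
      omega
    · have hadj : G.lineGraph.Adj e ⟨s(x, z), hg⟩ :=
        lineGraph_adj_iff_exists.2 ⟨hne, x, hx, Sym2.mem_mk_left x z⟩
      refine ⟨SimpleGraph.Walk.cons hadj q', ?_⟩
      simp only [SimpleGraph.Walk.length_cons]
      omega

lemma dist_le_of_mem_edges {g : G.edgeSet} {x z : V}
    (hx : x ∈ (g : Sym2 V)) (hz : z ∈ (g : Sym2 V)) : G.dist x z ≤ 1 := by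
  rcases eq_or_ne x z with rfl | hne
  · simp [SimpleGraph.dist_self]
  · have heq : (g : Sym2 V) = s(x, z) := (Sym2.mem_and_mem_iff hne).1 ⟨hx, hz⟩
    have hadj : G.Adj x z := by
      have h2 := g.2
      rw [heq] at h2
      exact (SimpleGraph.mem_edgeSet G).1 h2
    rw [SimpleGraph.dist_eq_one_iff_adj.2 hadj]

lemma dist_of_lineWalk (hconn : G.Connected) :
    ∀ {e f : G.edgeSet} (q : G.lineGraph.Walk e f), e ≠ f →
      ∃ x ∈ (e : Sym2 V), ∃ y ∈ (f : Sym2 V), G.dist x y + 1 ≤ q.length := by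
  intro e f q
  induction q with
  | nil => intro h; exact absurd rfl h
  | @cons e g f hadj q' ih =>
    intro _
    obtain ⟨hne, x, hxe, hxg⟩ := lineGraph_adj_iff_exists.1 hadj
    rcases eq_or_ne g f with rfl | hgf
    · refine ⟨x, hxe, x, hxg, ?_⟩
      simp [SimpleGraph.dist_self]
    · obtain ⟨z, hzg, y, hyf, hd⟩ := ih hgf
      have hxz : G.dist x z ≤ 1 := dist_le_of_mem_edges hxg hzg
      have htri : G.dist x y ≤ G.dist x z + G.dist z y := hconn.dist_triangle
      refine ⟨x, hxe, y, hyf, ?_⟩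
      simp only [SimpleGraph.Walk.length_cons]
      omega

end LineWalk
section MinFormula

variable {V : Type*} {G : SimpleGraph V} {n : ℕ} {φ : V → Fin n → Bool} {d : ℕ}
  {p : Fin d → Fin n}

/-- Number of Θ-classes strictly separating the two edges. -/
noncomputable def sepNum (φ : V → Fin n → Bool) (p : Fin d → Fin n) (e f : Sym2 V) : ℕ :=
  (Finset.univ.filter fun i => ∀ x ∈ e, ∀ y ∈ f, φ x (p i) ≠ φ y (p i)).card

lemma flip_of_DD {u v : V} {c : Fin n} (h : DD φ s(u, v) = {c}) :
    ∀ r, φ u r ≠ φ v r ↔ r = c := by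
  intro r
  rw [DD_mk] at h
  constructor
  · intro hr
    have hmem : r ∈ Finset.univ.filter fun q => φ u q ≠ φ v q :=
      Finset.mem_filter.2 ⟨Finset.mem_univ _, hr⟩
    rw [h] at hmem
    exact Finset.mem_singleton.1 hmem
  · rintro rfl
    have hmem : r ∈ Finset.univ.filter fun q => φ u q ≠ φ v q := by
      rw [h]; exact Finset.mem_singleton_self _
    exact (Finset.mem_filter.1 hmem).2

lemma sep_le_dist (hconn : G.Connected)
    (hφ : ∀ u v, hammingDist (φ u) (φ v) = G.dist u v)
    (hcls : ∀ u v, G.Adj u v → ∃ i : Fin d, ∀ r, φ u r ≠ φ v r ↔ r = p i)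
    (hpinj : Function.Injective p) (e f : Sym2 V) {x y : V}
    (hx : x ∈ e) (hy : y ∈ f) :
    sepNum φ p e f ≤ G.dist x y := by
  rw [dist_eq_card_sep hconn hφ hcls hpinj]
  apply Finset.card_le_card
  intro i hi
  have hsep := (Finset.mem_filter.1 hi).2
  exact Finset.mem_filter.2 ⟨Finset.mem_univ _, hsep x hx y hy⟩

lemma exists_dist_le_sep (hconn : G.Connected)
    (hφ : ∀ u v, hammingDist (φ u) (φ v) = G.dist u v)
    (hcls : ∀ u v, G.Adj u v → ∃ i : Fin d, ∀ r, φ u r ≠ φ v r ↔ r = p i)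
    (hpinj : Function.Injective p)
    (hcluniq : ∀ g ∈ G.edgeSet, ∃ i : Fin d, DD φ g = {p i})
    {e f : Sym2 V} (he : e ∈ G.edgeSet) (hf : f ∈ G.edgeSet) :
    ∃ x ∈ e, ∃ y ∈ f, G.dist x y ≤ sepNum φ p e f := by
  induction e using Sym2.ind with | _ u₁ v₁ => ?_
  induction f using Sym2.ind with | _ u₂ v₂ => ?_
  obtain ⟨ie, hie⟩ := hcluniq _ he
  obtain ⟨jf, hjf⟩ := hcluniq _ hf
  have flipe : ∀ r, φ u₁ r ≠ φ v₁ r ↔ r = p ie := flip_of_DD hie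
  have flipf : ∀ r, φ u₂ r ≠ φ v₂ r ↔ r = p jf := flip_of_DD hjf
  have econst : ∀ i : Fin d, i ≠ ie → φ u₁ (p i) = φ v₁ (p i) := by
    intro i hi
    by_contra hc
    exact hi (hpinj ((flipe (p i)).1 hc))
  have fconst : ∀ i : Fin d, i ≠ jf → φ u₂ (p i) = φ v₂ (p i) := by
    intro i hi
    by_contra hc
    exact hi (hpinj ((flipf (p i)).1 hc))
  -- choose x ∈ e agreeing with f's constant value at coordinate p ie when possible,
  -- and y ∈ f agreeing with appropriate values.
  by_cases hc : ie = jf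
  · -- both edges flip the same coordinate
    subst hc
    -- choose x := u₁, and y ∈ f with matching value at p ie
    have hyex : ∃ y, (y = u₂ ∨ y = v₂) ∧ φ y (p ie) = φ u₁ (p ie) := by
      by_cases h2 : φ u₂ (p ie) = φ u₁ (p ie)
      · exact ⟨u₂, Or.inl rfl, h2⟩
      · exact ⟨v₂, Or.inr rfl, bool_eq_of_ne_ne _ _ _ ((flipf (p ie)).2 rfl) h2⟩
    obtain ⟨y, hymem, hyval⟩ := hyex
    have hymem' : y ∈ s(u₂, v₂) := by
      rcases hymem with rfl | rfl
      · exact Sym2.mem_mk_left _ _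
      · exact Sym2.mem_mk_right _ _
    refine ⟨u₁, Sym2.mem_mk_left _ _, y, hymem', ?_⟩
    rw [dist_eq_card_sep hconn hφ hcls hpinj]
    apply Finset.card_le_card
    intro i hi
    have hne := (Finset.mem_filter.1 hi).2
    refine Finset.mem_filter.2 ⟨Finset.mem_univ _, ?_⟩
    rcases eq_or_ne i ie with rfl | hiie
    · exact absurd hyval.symm hne
    · -- i ≠ ie : both edges constant at p i, and they differ (witnessed by u₁ vs y)
      intro x' hx' y' hy'
      have hx'v : φ x' (p i) = φ u₁ (p i) := by
        rcases Sym2.mem_iff.1 hx' with rfl | rfl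
        · rfl
        · exact (econst i hiie).symm
      have hy'v : φ y' (p i) = φ y (p i) := by
        rcases Sym2.mem_iff.1 hy' with rfl | rfl <;> rcases hymem with rfl | rfl
        · rfl
        · exact fconst i hiie
        · exact (fconst i hiie).symm
        · rfl
      rw [hx'v, hy'v]
      exact hne
  · -- different classes
    have hpne : p ie ≠ p jf := fun h => hc (hpinj h)
    have hfc : φ u₂ (p ie) = φ v₂ (p ie) := fconst ie hc
    have hec : φ u₁ (p jf) = φ v₁ (p jf) := econst jf (Ne.symm hc)
    have hxex : ∃ x, (x = u₁ ∨ x = v₁) ∧ φ x (p ie) = φ u₂ (p ie) := by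
      by_cases h2 : φ u₁ (p ie) = φ u₂ (p ie)
      · exact ⟨u₁, Or.inl rfl, h2⟩
      · exact ⟨v₁, Or.inr rfl, bool_eq_of_ne_ne _ _ _ ((flipe (p ie)).2 rfl) h2⟩
    obtain ⟨x, hxmem, hxval⟩ := hxex
    have hyex : ∃ y, (y = u₂ ∨ y = v₂) ∧ φ y (p jf) = φ u₁ (p jf) := by
      by_cases h2 : φ u₂ (p jf) = φ u₁ (p jf)
      · exact ⟨u₂, Or.inl rfl, h2⟩
      · exact ⟨v₂, Or.inr rfl, bool_eq_of_ne_ne _ _ _ ((flipf (p jf)).2 rfl) h2⟩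
    obtain ⟨y, hymem, hyval⟩ := hyex
    have hxmem' : x ∈ s(u₁, v₁) := by
      rcases hxmem with rfl | rfl
      · exact Sym2.mem_mk_left _ _
      · exact Sym2.mem_mk_right _ _
    have hymem' : y ∈ s(u₂, v₂) := by
      rcases hymem with rfl | rfl
      · exact Sym2.mem_mk_left _ _
      · exact Sym2.mem_mk_right _ _
    refine ⟨x, hxmem', y, hymem', ?_⟩
    rw [dist_eq_card_sep hconn hφ hcls hpinj]
    apply Finset.card_le_card
    intro i hi
    have hne := (Finset.mem_filter.1 hi).2
    refine Finset.mem_filter.2 ⟨Finset.mem_univ _, ?_⟩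
    have hyu2 : ∀ k : Fin d, k ≠ jf → φ y (p k) = φ u₂ (p k) := by
      intro k hk
      rcases hymem with rfl | rfl
      · rfl
      · exact (fconst k hk).symm
    have hxu1 : ∀ k : Fin d, k ≠ ie → φ x (p k) = φ u₁ (p k) := by
      intro k hk
      rcases hxmem with rfl | rfl
      · rfl
      · exact (econst k hk).symm
    rcases eq_or_ne i ie with rfl | hiie
    · -- φ x (p ie) = φ u₂ (p ie) and y agrees with u₂ at p ie (since ie ≠ jf)
      exfalso
      apply hne
      rw [hxval, ← hyu2 _ hc]
    · rcases eq_or_ne i jf with rfl | hijf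
      · exfalso
        apply hne
        rw [hyval, ← hxu1 _ (Ne.symm hc)]
      · -- both constant at p i
        intro x' hx' y' hy'
        have hx'v : φ x' (p i) = φ x (p i) := by
          rcases Sym2.mem_iff.1 hx' with rfl | rfl <;> rcases hxmem with rfl | rfl
          · rfl
          · exact econst i hiie
          · exact (econst i hiie).symm
          · rfl
        have hy'v : φ y' (p i) = φ y (p i) := by
          rcases Sym2.mem_iff.1 hy' with rfl | rfl <;> rcases hymem with rfl | rfl
          · rfl
          · exact fconst i hijf
          · exact (fconst i hijf).symm
          · rfl
        rw [hx'v, hy'v]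
        exact hne

lemma lineGraph_dist_formula (hconn : G.Connected)
    (hφ : ∀ u v, hammingDist (φ u) (φ v) = G.dist u v)
    (hcls : ∀ u v, G.Adj u v → ∃ i : Fin d, ∀ r, φ u r ≠ φ v r ↔ r = p i)
    (hpinj : Function.Injective p)
    (hcluniq : ∀ g ∈ G.edgeSet, ∃ i : Fin d, DD φ g = {p i})
    {e f : G.edgeSet} (hne : e ≠ f) :
    G.lineGraph.dist e f = sepNum φ p (e : Sym2 V) (f : Sym2 V) + 1 := by
  obtain ⟨x, hx, y, hy, hxy⟩ := exists_dist_le_sep hconn hφ hcls hpinj hcluniq e.2 f.2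
  obtain ⟨w, hw⟩ := hconn.exists_walk_length_eq_dist x y
  obtain ⟨q, hq⟩ := lineWalk_of_walk w e f hx hy
  have hupper : G.lineGraph.dist e f ≤ sepNum φ p (e : Sym2 V) (f : Sym2 V) + 1 := by
    have := SimpleGraph.dist_le q
    omega
  obtain ⟨q0, hq0⟩ := SimpleGraph.Reachable.exists_walk_length_eq_dist ⟨q⟩
  obtain ⟨x', hx', y', hy', hd⟩ := dist_of_lineWalk hconn q0 hne
  have hlow := sep_le_dist hconn hφ hcls hpinj (e : Sym2 V) (f : Sym2 V) hx' hy'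
  omega

end MinFormula
section Counting

/-- rational indicator with a pinned (classical) decidability instance -/
noncomputable def ind (P : Prop) : ℚ := if P then 1 else 0

lemma ind_pos {P : Prop} (h : P) : ind P = 1 := if_pos h
lemma ind_neg {P : Prop} (h : ¬P) : ind P = 0 := if_neg h

lemma bool_ne_iff' : ∀ a b : Bool, a ≠ b ↔ a = !b := by decide

lemma sum_swap4 {E I : Type*} [Fintype E] [Fintype I] (F : E → E → I → I → ℚ) :
    ∑ e : E, ∑ f : E, ∑ i : I, ∑ j : I, F e f i j
    = ∑ i : I, ∑ j : I, ∑ e : E, ∑ f : E, F e f i j := by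
  calc ∑ e : E, ∑ f : E, ∑ i : I, ∑ j : I, F e f i j
      = ∑ e : E, ∑ i : I, ∑ f : E, ∑ j : I, F e f i j :=
        Finset.sum_congr rfl fun e _ => Finset.sum_comm
    _ = ∑ i : I, ∑ e : E, ∑ f : E, ∑ j : I, F e f i j := Finset.sum_comm
    _ = ∑ i : I, ∑ e : E, ∑ j : I, ∑ f : E, F e f i j :=
        Finset.sum_congr rfl fun i _ => Finset.sum_congr rfl fun e _ => Finset.sum_comm
    _ = ∑ i : I, ∑ j : I, ∑ e : E, ∑ f : E, F e f i j :=
        Finset.sum_congr rfl fun i _ => Finset.sum_comm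

lemma sum_sq_sub_eq {E : Type*} [Fintype E] {d : ℕ} (χ : Fin d → E → E → ℚ)
    (hχ : ∀ i e f, χ i e f * χ i e f = χ i e f) :
    ∑ e : E, ∑ f : E, ((∑ i : Fin d, χ i e f) ^ 2 - ∑ i : Fin d, χ i e f)
    = ∑ i : Fin d, ∑ j : Fin d,
        (if i = j then 0 else ∑ e : E, ∑ f : E, χ i e f * χ j e f) := by
  have hpt : ∀ e f, ((∑ i : Fin d, χ i e f) ^ 2 - ∑ i : Fin d, χ i e f)
      = ∑ i : Fin d, ∑ j : Fin d, (if i = j then 0 else χ i e f * χ j e f) := by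
    intro e f
    have hsq : (∑ i : Fin d, χ i e f) ^ 2
        = ∑ i : Fin d, ∑ j : Fin d, χ i e f * χ j e f := by
      rw [sq, Finset.sum_mul_sum]
    have hsplit : ∀ i j : Fin d, χ i e f * χ j e f
        = (if i = j then χ i e f * χ j e f else 0) + (if i = j then 0 else χ i e f * χ j e f) := by
      intro i j; split <;> ring
    calc ((∑ i : Fin d, χ i e f) ^ 2 - ∑ i : Fin d, χ i e f)
        = (∑ i : Fin d, ∑ j : Fin d, χ i e f * χ j e f) - ∑ i : Fin d, χ i e f := by rw [hsq]
      _ = (∑ i : Fin d, ∑ j : Fin d, ((if i = j then χ i e f * χ j e f else 0)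
            + (if i = j then 0 else χ i e f * χ j e f))) - ∑ i : Fin d, χ i e f := by
            congr 1
            exact Finset.sum_congr rfl fun i _ => Finset.sum_congr rfl fun j _ => hsplit i j
      _ = (∑ i : Fin d, ∑ j : Fin d, (if i = j then χ i e f * χ j e f else 0))
            + (∑ i : Fin d, ∑ j : Fin d, (if i = j then 0 else χ i e f * χ j e f))
            - ∑ i : Fin d, χ i e f := by
            rw [← Finset.sum_add_distrib]
            congr 1
            exact Finset.sum_congr rfl fun i _ => Finset.sum_add_distrib
      _ = ∑ i : Fin d, ∑ j : Fin d, (if i = j then 0 else χ i e f * χ j e f) := by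
            have hdiag : ∀ i : Fin d, (∑ j : Fin d, if i = j then χ i e f * χ j e f else 0)
                = χ i e f := by
              intro i
              rw [Finset.sum_ite_eq]
              simp [hχ]
            rw [Finset.sum_congr rfl fun i _ => hdiag i]
            ring
  rw [Finset.sum_congr rfl fun e _ => Finset.sum_congr rfl fun f _ => hpt e f]
  rw [sum_swap4 (fun e f i j => if i = j then 0 else χ i e f * χ j e f)]
  refine Finset.sum_congr rfl fun i _ => Finset.sum_congr rfl fun j _ => ?_
  by_cases hij : i = j <;> simp [hij]

/-- pointwise product of separation indicators splits into quadrant indicators -/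
lemma sep_prod_pointwise {V : Type*} {n d : ℕ} (φ : V → Fin n → Bool) (p : Fin d → Fin n)
    (i j : Fin d) (e f : Sym2 V) :
    ind (∀ x ∈ e, ∀ y ∈ f, φ x (p i) ≠ φ y (p i))
      * ind (∀ x ∈ e, ∀ y ∈ f, φ x (p j) ≠ φ y (p j))
    = ∑ a : Bool, ∑ b : Bool,
        ind ((∀ x ∈ e, φ x (p i) = a) ∧ (∀ x ∈ e, φ x (p j) = b))
          * ind ((∀ y ∈ f, φ y (p i) = !a) ∧ (∀ y ∈ f, φ y (p j) = !b)) := by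
  by_cases hb : (∀ x ∈ e, ∀ y ∈ f, φ x (p i) ≠ φ y (p i))
      ∧ (∀ x ∈ e, ∀ y ∈ f, φ x (p j) ≠ φ y (p j))
  · obtain ⟨h1, h2⟩ := hb
    obtain ⟨x0, hx0⟩ : ∃ x0, x0 ∈ e := ⟨e.out.1, Sym2.out_fst_mem e⟩
    obtain ⟨y0, hy0⟩ : ∃ y0, y0 ∈ f := ⟨f.out.1, Sym2.out_fst_mem f⟩
    have heconst : ∀ (k : Fin d), (∀ x ∈ e, ∀ y ∈ f, φ x (p k) ≠ φ y (p k)) →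
        ∀ x ∈ e, φ x (p k) = φ x0 (p k) := by
      intro k hk x hx
      exact bool_eq_of_ne_ne _ _ _ (Ne.symm (hk x hx y0 hy0)) (Ne.symm (hk x0 hx0 y0 hy0))
    have hfconst : ∀ (k : Fin d), (∀ x ∈ e, ∀ y ∈ f, φ x (p k) ≠ φ y (p k)) →
        ∀ y ∈ f, φ y (p k) = !(φ x0 (p k)) := by
      intro k hk y hy
      exact (bool_ne_iff' _ _).1 (Ne.symm (hk x0 hx0 y hy))
    set a0 := φ x0 (p i) with ha0
    set b0 := φ x0 (p j) with hb0
    have hQe : ∀ a b : Bool,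
        ((∀ x ∈ e, φ x (p i) = a) ∧ (∀ x ∈ e, φ x (p j) = b)) ↔ (a = a0 ∧ b = b0) := by
      intro a b
      constructor
      · rintro ⟨hA, hB⟩
        exact ⟨(hA x0 hx0).symm, (hB x0 hx0).symm⟩
      · rintro ⟨rfl, rfl⟩
        exact ⟨heconst i h1, heconst j h2⟩
    have hQf : ∀ a b : Bool,
        ((∀ y ∈ f, φ y (p i) = !a) ∧ (∀ y ∈ f, φ y (p j) = !b)) ↔ (a = a0 ∧ b = b0) := by
      intro a b
      constructor
      · rintro ⟨hA, hB⟩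
        constructor
        · exact Bool.not_inj ((hA y0 hy0).symm.trans (hfconst i h1 y0 hy0))
        · exact Bool.not_inj ((hB y0 hy0).symm.trans (hfconst j h2 y0 hy0))
      · rintro ⟨rfl, rfl⟩
        exact ⟨hfconst i h1, hfconst j h2⟩
    have hone : ∀ c0 c1 : Bool, (∑ a : Bool, ∑ b : Bool,
        ind (a = c0 ∧ b = c1) * ind (a = c0 ∧ b = c1)) = 1 := by
      intro c0 c1
      cases c0 <;> cases c1 <;> simp [ind, Fintype.sum_bool]
    simp only [hQe, hQf]
    rw [ind_pos h1, ind_pos h2, hone a0 b0]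
    norm_num
  · have hLHS : ind (∀ x ∈ e, ∀ y ∈ f, φ x (p i) ≠ φ y (p i))
        * ind (∀ x ∈ e, ∀ y ∈ f, φ x (p j) ≠ φ y (p j)) = 0 := by
      by_cases h1 : (∀ x ∈ e, ∀ y ∈ f, φ x (p i) ≠ φ y (p i))
      · by_cases h2 : (∀ x ∈ e, ∀ y ∈ f, φ x (p j) ≠ φ y (p j))
        · exact absurd ⟨h1, h2⟩ hb
        · rw [ind_neg h2, mul_zero]
      · rw [ind_neg h1, zero_mul]
    rw [hLHS]
    symm
    refine Finset.sum_eq_zero fun a _ => Finset.sum_eq_zero fun b _ => ?_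
    by_cases hq1 : ((∀ x ∈ e, φ x (p i) = a) ∧ (∀ x ∈ e, φ x (p j) = b))
    · by_cases hq2 : ((∀ y ∈ f, φ y (p i) = !a) ∧ (∀ y ∈ f, φ y (p j) = !b))
      · exfalso
        apply hb
        constructor
        · intro x hx y hy
          rw [hq1.1 x hx, hq2.1 y hy]
          simp
        · intro x hx y hy
          rw [hq1.2 x hx, hq2.2 y hy]
          simp
      · rw [ind_neg hq2, mul_zero]
    · rw [ind_neg hq1, zero_mul]

end Counting
section FinalHelpers

lemma DD_edge_singleton {V : Type*} {G : SimpleGraph V} {n : ℕ} {φ : V → Fin n → Bool}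
    (hφ : ∀ u v, hammingDist (φ u) (φ v) = G.dist u v) {e : Sym2 V}
    (he : e ∈ G.edgeSet) : ∃ c, DD φ e = {c} := by
  induction e using Sym2.ind with | _ u v => ?_
  have hadj : G.Adj u v := (SimpleGraph.mem_edgeSet G).1 he
  obtain ⟨c, hc⟩ := edge_flip hφ hadj
  refine ⟨c, ?_⟩
  rw [DD_mk]
  ext q
  simp only [Finset.mem_filter, Finset.mem_univ, true_and, Finset.mem_singleton]
  exact hc q

lemma ncard_eq_sum {V : Type*} [Fintype V] {G : SimpleGraph V} {A : Set (Sym2 V)}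
    (hA : A ⊆ G.edgeSet) :
    ((A.ncard : ℚ)) = ∑ e : G.edgeSet, ind ((e : Sym2 V) ∈ A) := by
  simp only [ind]
  rw [Finset.sum_boole]
  have h1 : A = Subtype.val '' {e : G.edgeSet | (e : Sym2 V) ∈ A} := by
    ext x
    constructor
    · intro hx; exact ⟨⟨x, hA hx⟩, hx, rfl⟩
    · rintro ⟨e, he, rfl⟩; exact he
  have h2 : A.ncard = (Finset.univ.filter (fun e : G.edgeSet => (e : Sym2 V) ∈ A)).card := by
    rw [h1, Set.ncard_image_of_injective _ Subtype.val_injective]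
    rw [← Set.ncard_coe_finset]
    congr 1
    ext e
    simp
  rw [h2]

lemma sum_bool_pair (c : Bool) (h : Bool → ℚ) : (∑ a : Bool, h a) = h c + h (!c) := by
  cases c <;> rw [Fintype.sum_bool] <;> simp [add_comm]

lemma sum_offdiag_symm {d : ℕ} (t : Fin d → Fin d → ℚ) (hsymm : ∀ i j, t i j = t j i) :
    ∑ i : Fin d, ∑ j : Fin d, (if i = j then 0 else t i j)
    = 2 * ∑ i : Fin d, ∑ j : Fin d, (if i < j then t i j else 0) := by
  have hpt : ∀ i j : Fin d, (if i = j then (0:ℚ) else t i j)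
      = (if i < j then t i j else 0) + (if j < i then t i j else 0) := by
    intro i j
    rcases lt_trichotomy i j with h | h | h
    · rw [if_neg (ne_of_lt h), if_pos h, if_neg (fun hc => lt_asymm h hc), add_zero]
    · subst h; simp
    · rw [if_neg (Ne.symm (ne_of_lt h)), if_neg (fun hc => lt_asymm h hc), if_pos h, zero_add]
  rw [Finset.sum_congr rfl fun i _ => Finset.sum_congr rfl fun j _ => hpt i j]
  have hsplit : ∑ i : Fin d, ∑ j : Fin d,
      ((if i < j then t i j else 0) + (if j < i then t i j else 0))
      = (∑ i : Fin d, ∑ j : Fin d, (if i < j then t i j else 0))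
        + ∑ i : Fin d, ∑ j : Fin d, (if j < i then t i j else 0) := by
    rw [← Finset.sum_add_distrib]
    exact Finset.sum_congr rfl fun i _ => Finset.sum_add_distrib
  rw [hsplit]
  have hswap : ∑ i : Fin d, ∑ j : Fin d, (if j < i then t i j else 0)
      = ∑ i : Fin d, ∑ j : Fin d, (if i < j then t i j else 0) := by
    rw [Finset.sum_comm]
    exact Finset.sum_congr rfl fun j _ => Finset.sum_congr rfl fun i _ => by
      rcases lt_or_ge j i with h | h
      · rw [if_pos h, if_pos h, hsymm]
      · rw [if_neg (not_lt.2 h), if_neg (not_lt.2 h)]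
  rw [hswap]
  ring

end FinalHelpers
theorem stmt11 {V : Type*} [Fintype V] (G : SimpleGraph V) (hPC : IsPartialCube G)
    (d : ℕ) (Ecl : Fin d → Set (Sym2 V))
    -- `Ecl` enumerates the Θ-classes of `G`:
    (hsub : ∀ i, Ecl i ⊆ G.edgeSet)
    (hne : ∀ i, (Ecl i).Nonempty)
    (hpart : ∀ e ∈ G.edgeSet, ∃! i, e ∈ Ecl i)
    (hcl : ∀ i, ∀ e ∈ Ecl i, ∀ f ∈ G.edgeSet, (f ∈ Ecl i ↔ theta G e f))
    -- `U i` and its complement are the two components of `G - Ecl i`: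
    (U : Fin d → Set V)
    (hU : ∀ i, ∀ u v : V,
      (G.deleteEdges (Ecl i)).Reachable u v ↔ (u ∈ U i ↔ v ∈ U i)) :
    (1 / 4 : ℚ) * (∑ e : G.edgeSet, ∑ f : G.edgeSet, (G.lineGraph.dist e f : ℚ)) +
      (1 / 4 : ℚ) * (∑ e : G.edgeSet, ∑ f : G.edgeSet, (G.lineGraph.dist e f : ℚ) ^ 2) =
    2 * ((1 / 2 : ℚ) * ∑ e : G.edgeSet, ∑ f : G.edgeSet, (G.lineGraph.dist e f : ℚ)) +
      (∑ i : Fin d, ∑ j : Fin d, if i < j then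
          ((edgesWithin G (U i ∩ U j)).ncard * (edgesWithin G ((U i)ᶜ ∩ (U j)ᶜ)).ncard +
            (edgesWithin G (U i ∩ (U j)ᶜ)).ncard * (edgesWithin G ((U i)ᶜ ∩ U j)).ncard : ℚ)
        else 0) -
      (Nat.choose (Fintype.card G.edgeSet) 2 : ℚ) := by
  classical
  obtain ⟨hconn, n, φ, hφ0⟩ := hPC
  have hφ : ∀ u v, hammingDist (φ u) (φ v) = G.dist u v := fun u v => by
    rw [← hφ0 u v, cube_dist_eq]
  choose eE heE using hne
  have heEedge : ∀ i, eE i ∈ G.edgeSet := fun i => hsub i (heE i)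
  choose p hp using fun i => DD_edge_singleton hφ (heEedge i)
  have hmemD : ∀ i, ∀ g ∈ G.edgeSet, (g ∈ Ecl i ↔ DD φ g = {p i}) := by
    intro i g hg
    rw [hcl i (eE i) (heE i) g hg, theta_iff_DD hφ (heEedge i) hg, hp i, eq_comm]
  have hpinj : Function.Injective p := by
    intro i j hij
    have h1 : eE j ∈ Ecl i := (hmemD i (eE j) (heEedge j)).2 (by rw [hp j, hij])
    obtain ⟨k, -, hk⟩ := hpart (eE j) (heEedge j)
    rw [hk i h1, hk j (heE j)]
  have hcls : ∀ u v, G.Adj u v → ∃ i, ∀ r, φ u r ≠ φ v r ↔ r = p i := by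
    intro u v hadj
    have he : s(u, v) ∈ G.edgeSet := hadj
    obtain ⟨i, hi, -⟩ := hpart _ he
    exact ⟨i, flip_of_DD ((hmemD i _ he).1 hi)⟩
  have hcluniq : ∀ g ∈ G.edgeSet, ∃ i, DD φ g = {p i} := by
    intro g hg
    obtain ⟨i, hi, -⟩ := hpart g hg
    exact ⟨i, (hmemD i g hg).1 hi⟩
  have hreach : ∀ i u v, (G.deleteEdges (Ecl i)).Reachable u v ↔ φ u (p i) = φ v (p i) := by
    intro i u v
    constructor
    · intro h
      refine reach_same_coord ?_ h
      intro a b hab hnot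
      by_contra hc
      obtain ⟨k, hk, -⟩ := hpart s(a, b) hab
      have hflip := flip_of_DD ((hmemD k _ hab).1 hk)
      have hpk : p i = p k := (hflip (p i)).1 hc
      exact hnot (hpinj hpk ▸ hk)
    · intro h
      exact same_coord_reach hconn hφ hcls
        (fun a b hab hmem => flip_of_DD ((hmemD i _ hab).1 hmem)) (G.dist u v) u v rfl h
  have hβex : ∀ i, ∃ c : Bool, ∀ w, w ∈ U i ↔ φ w (p i) = c := by
    intro i
    obtain ⟨a, b, hab⟩ := Sym2.ind (f := fun e => ∃ a b : V, e = s(a, b))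
      (fun a b => ⟨a, b, rfl⟩) (eE i)
    have hflip := flip_of_DD (show DD φ s(a, b) = {p i} by rw [← hab, hp i])
    have hne' : φ a (p i) ≠ φ b (p i) := (hflip (p i)).2 rfl
    have hdiff : ¬ (a ∈ U i ↔ b ∈ U i) := fun h => hne' ((hreach i a b).1 ((hU i a b).2 h))
    by_cases ha : a ∈ U i
    · refine ⟨φ a (p i), fun w => ⟨fun hw => ?_, fun hw => ?_⟩⟩
      · exact (hreach i w a).1 ((hU i w a).2 (iff_of_true hw ha))
      · exact ((hU i w a).1 ((hreach i w a).2 hw)).2 ha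
    · have hb : b ∈ U i := by
        by_contra hbn; exact hdiff (iff_of_false ha hbn)
      refine ⟨φ b (p i), fun w => ⟨fun hw => ?_, fun hw => ?_⟩⟩
      · exact (hreach i w b).1 ((hU i w b).2 (iff_of_true hw hb))
      · exact ((hU i w b).1 ((hreach i w b).2 hw)).2 hb
  choose β hUc using hβex
  have hbneq : ∀ b : Bool, (!b) ≠ b := by decide
  have hUcc : ∀ i (x : V), x ∈ (U i)ᶜ ↔ φ x (p i) = !(β i) := by
    intro i x
    rw [Set.mem_compl_iff]
    constructor
    · intro hx
      exact (bool_ne_iff' _ _).1 (fun hc => hx ((hUc i x).2 hc))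
    · intro hx hc
      have h2 := (hUc i x).1 hc
      rw [h2] at hx
      exact (Ne.symm (hbneq (β i))) hx
  set sS : Fin d → Bool → Set V := fun i a => if a = β i then U i else (U i)ᶜ with hsSdef
  have hsS : ∀ i (a : Bool) (x : V), x ∈ sS i a ↔ φ x (p i) = a := by
    intro i a x
    by_cases hab : a = β i
    · rw [hab]
      show x ∈ (if β i = β i then U i else (U i)ᶜ) ↔ _
      rw [if_pos rfl]
      exact hUc i x
    · have ha' : a = !(β i) := by
        cases a <;> cases hb2 : β i <;> simp_all
      rw [ha']
      show x ∈ (if (!(β i)) = β i then U i else (U i)ᶜ) ↔ _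
      rw [if_neg (hbneq (β i))]
      exact hUcc i x
  have hsSb : ∀ i, sS i (β i) = U i := by
    intro i
    show (if β i = β i then U i else (U i)ᶜ) = U i
    rw [if_pos rfl]
  have hsSnb : ∀ i, sS i (!(β i)) = (U i)ᶜ := by
    intro i
    show (if (!(β i)) = β i then U i else (U i)ᶜ) = (U i)ᶜ
    rw [if_neg (hbneq (β i))]
  have hEWsub : ∀ s : Set V, edgesWithin G s ⊆ G.edgeSet := fun s e he => he.1
  -- counts per quadrant
  have hcnt : ∀ i j (a b : Bool),
      ((edgesWithin G (sS i a ∩ sS j b)).ncard : ℚ)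
      = ∑ e : G.edgeSet, ind ((∀ x ∈ (e : Sym2 V), φ x (p i) = a) ∧
          (∀ x ∈ (e : Sym2 V), φ x (p j) = b)) := by
    intro i j a b
    rw [ncard_eq_sum (hEWsub _)]
    refine Finset.sum_congr rfl fun e _ => congrArg ind (propext ?_)
    constructor
    · intro h
      exact ⟨fun x hx => (hsS i a x).1 ((h.2 x hx).1), fun x hx => (hsS j b x).1 ((h.2 x hx).2)⟩
    · intro h
      exact ⟨e.2, fun x hx => ⟨(hsS i a x).2 (h.1 x hx), (hsS j b x).2 (h.2 x hx)⟩⟩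
  -- the per-pair-of-classes count
  have hW : ∀ i j : Fin d,
      (∑ e : G.edgeSet, ∑ f : G.edgeSet,
        ind (∀ x ∈ (e : Sym2 V), ∀ y ∈ (f : Sym2 V), φ x (p i) ≠ φ y (p i))
        * ind (∀ x ∈ (e : Sym2 V), ∀ y ∈ (f : Sym2 V), φ x (p j) ≠ φ y (p j)))
      = 2 * (((edgesWithin G (U i ∩ U j)).ncard : ℚ) * ((edgesWithin G ((U i)ᶜ ∩ (U j)ᶜ)).ncard : ℚ)
           + ((edgesWithin G (U i ∩ (U j)ᶜ)).ncard : ℚ) * ((edgesWithin G ((U i)ᶜ ∩ U j)).ncard : ℚ)) := by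
    intro i j
    have step1 : (∑ e : G.edgeSet, ∑ f : G.edgeSet,
        ind (∀ x ∈ (e : Sym2 V), ∀ y ∈ (f : Sym2 V), φ x (p i) ≠ φ y (p i))
        * ind (∀ x ∈ (e : Sym2 V), ∀ y ∈ (f : Sym2 V), φ x (p j) ≠ φ y (p j)))
        = ∑ e : G.edgeSet, ∑ f : G.edgeSet, ∑ a : Bool, ∑ b : Bool,
            ind ((∀ x ∈ (e : Sym2 V), φ x (p i) = a) ∧ (∀ x ∈ (e : Sym2 V), φ x (p j) = b))
            * ind ((∀ y ∈ (f : Sym2 V), φ y (p i) = !a) ∧ (∀ y ∈ (f : Sym2 V), φ y (p j) = !b)) :=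
      Finset.sum_congr rfl fun e _ => Finset.sum_congr rfl fun f _ =>
        sep_prod_pointwise φ p i j (e : Sym2 V) (f : Sym2 V)
    rw [step1]
    rw [sum_swap4 (fun (e f : G.edgeSet) (a b : Bool) =>
      ind ((∀ x ∈ (e : Sym2 V), φ x (p i) = a) ∧ (∀ x ∈ (e : Sym2 V), φ x (p j) = b))
      * ind ((∀ y ∈ (f : Sym2 V), φ y (p i) = !a) ∧ (∀ y ∈ (f : Sym2 V), φ y (p j) = !b)))]
    have step2 : ∀ a b : Bool,
        (∑ e : G.edgeSet, ∑ f : G.edgeSet,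
          ind ((∀ x ∈ (e : Sym2 V), φ x (p i) = a) ∧ (∀ x ∈ (e : Sym2 V), φ x (p j) = b))
          * ind ((∀ y ∈ (f : Sym2 V), φ y (p i) = !a) ∧ (∀ y ∈ (f : Sym2 V), φ y (p j) = !b)))
        = ((edgesWithin G (sS i a ∩ sS j b)).ncard : ℚ)
          * ((edgesWithin G (sS i (!a) ∩ sS j (!b))).ncard : ℚ) := by
      intro a b
      rw [hcnt i j a b, hcnt i j (!a) (!b), Finset.sum_mul_sum]
    rw [Finset.sum_congr rfl fun a _ => Finset.sum_congr rfl fun b _ => step2 a b]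
    rw [sum_bool_pair (β i) (fun a => ∑ b : Bool,
      ((edgesWithin G (sS i a ∩ sS j b)).ncard : ℚ)
        * ((edgesWithin G (sS i (!a) ∩ sS j (!b))).ncard : ℚ))]
    rw [sum_bool_pair (β j) (fun b =>
      ((edgesWithin G (sS i (β i) ∩ sS j b)).ncard : ℚ)
        * ((edgesWithin G (sS i (!(β i)) ∩ sS j (!b))).ncard : ℚ))]
    rw [sum_bool_pair (β j) (fun b =>
      ((edgesWithin G (sS i (!(β i)) ∩ sS j b)).ncard : ℚ)
        * ((edgesWithin G (sS i (!(!(β i))) ∩ sS j (!b))).ncard : ℚ))]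
    simp only [Bool.not_not, hsSb, hsSnb]
    ring
  -- χ indicators
  set χ : Fin d → G.edgeSet → G.edgeSet → ℚ := fun i e f =>
    ind (∀ x ∈ (e : Sym2 V), ∀ y ∈ (f : Sym2 V), φ x (p i) ≠ φ y (p i))
    with hχdef
  have hχsq : ∀ i e f, χ i e f * χ i e f = χ i e f := by
    intro i e f
    simp only [hχdef]
    by_cases h : (∀ x ∈ (e : Sym2 V), ∀ y ∈ (f : Sym2 V), φ x (p i) ≠ φ y (p i))
    · rw [ind_pos h]; norm_num
    · rw [ind_neg h]; norm_num
  have hχdiag : ∀ (i) (e : G.edgeSet), χ i e e = 0 := by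
    intro i e
    simp only [hχdef]
    refine ind_neg ?_
    intro h
    exact h (e : Sym2 V).out.1 (Sym2.out_fst_mem _) (e : Sym2 V).out.1 (Sym2.out_fst_mem _) rfl
  -- pointwise line-graph distance identity
  have hpt : ∀ e f : G.edgeSet,
      ((G.lineGraph.dist e f : ℚ) ^ 2 - 3 * (G.lineGraph.dist e f : ℚ))
      = ((∑ i : Fin d, χ i e f) ^ 2 - ∑ i : Fin d, χ i e f)
        + (2 * ind (e = f) - 2) := by
    intro e f
    rcases eq_or_ne e f with rfl | hnef
    · rw [SimpleGraph.dist_self]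
      rw [Finset.sum_congr rfl fun i _ => hχdiag i e, ind_pos rfl]
      simp only [Finset.sum_const_zero, Nat.cast_zero]
      norm_num
    · have hd := lineGraph_dist_formula hconn hφ hcls hpinj hcluniq hnef
      have hsc : ((sepNum φ p (e : Sym2 V) (f : Sym2 V) : ℕ) : ℚ) = ∑ i : Fin d, χ i e f := by
        rw [sepNum, Finset.card_filter]
        push_cast
        simp only [hχdef, ind]
        refine Finset.sum_congr rfl fun i _ => ?_
        congr 1
      rw [hd, ind_neg hnef]
      push_cast
      rw [hsc]
      ring
  -- the diagonal count
  have hdiag1 : ∀ e : G.edgeSet, (∑ f : G.edgeSet, ind (e = f)) = 1 := by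
    intro e
    have h0 : ∀ f ∈ Finset.univ, f ≠ e → ind (e = f) = 0 :=
      fun f _ hf => ind_neg (fun h => hf h.symm)
    rw [Finset.sum_eq_single e h0 (by simp)]
    exact ind_pos rfl
  have hdiag : (∑ e : G.edgeSet, ∑ f : G.edgeSet, ind (e = f))
      = (Fintype.card G.edgeSet : ℚ) := by
    rw [Finset.sum_congr rfl fun e _ => hdiag1 e]
    simp [Finset.card_univ]
  -- main identity
  have hS1 : (∑ e : G.edgeSet, ∑ f : G.edgeSet,
        ((∑ i : Fin d, χ i e f) ^ 2 - ∑ i : Fin d, χ i e f))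
      = 4 * (∑ i : Fin d, ∑ j : Fin d, if i < j then
          ((edgesWithin G (U i ∩ U j)).ncard * (edgesWithin G ((U i)ᶜ ∩ (U j)ᶜ)).ncard +
            (edgesWithin G (U i ∩ (U j)ᶜ)).ncard * (edgesWithin G ((U i)ᶜ ∩ U j)).ncard : ℚ)
        else 0) := by
    rw [sum_sq_sub_eq χ hχsq]
    have hrw : ∀ i j : Fin d,
        (if i = j then (0:ℚ) else ∑ e : G.edgeSet, ∑ f : G.edgeSet, χ i e f * χ j e f)
        = (if i = j then 0 else
            2 * (((edgesWithin G (U i ∩ U j)).ncard : ℚ)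
                  * ((edgesWithin G ((U i)ᶜ ∩ (U j)ᶜ)).ncard : ℚ)
               + ((edgesWithin G (U i ∩ (U j)ᶜ)).ncard : ℚ)
                  * ((edgesWithin G ((U i)ᶜ ∩ U j)).ncard : ℚ))) := by
      intro i j
      rcases eq_or_ne i j with rfl | hij
      · simp
      · rw [if_neg hij, if_neg hij]
        exact hW i j
    rw [Finset.sum_congr rfl fun i _ => Finset.sum_congr rfl fun j _ => hrw i j]
    refine Eq.trans (sum_offdiag_symm (fun i j =>
        2 * (((edgesWithin G (U i ∩ U j)).ncard : ℚ)
              * ((edgesWithin G ((U i)ᶜ ∩ (U j)ᶜ)).ncard : ℚ)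
           + ((edgesWithin G (U i ∩ (U j)ᶜ)).ncard : ℚ)
              * ((edgesWithin G ((U i)ᶜ ∩ U j)).ncard : ℚ)))
      (by
        intro i j
        rw [Set.inter_comm (U j) (U i), Set.inter_comm ((U j)ᶜ) ((U i)ᶜ),
          Set.inter_comm (U j) ((U i)ᶜ), Set.inter_comm ((U j)ᶜ) (U i)]
        ring)) ?_
    beta_reduce
    have hfac : ∀ i j : Fin d,
        (if i < j then
          2 * (((edgesWithin G (U i ∩ U j)).ncard : ℚ)
                * ((edgesWithin G ((U i)ᶜ ∩ (U j)ᶜ)).ncard : ℚ)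
             + ((edgesWithin G (U i ∩ (U j)ᶜ)).ncard : ℚ)
                * ((edgesWithin G ((U i)ᶜ ∩ U j)).ncard : ℚ)) else 0)
        = 2 * (if i < j then
            ((edgesWithin G (U i ∩ U j)).ncard * (edgesWithin G ((U i)ᶜ ∩ (U j)ᶜ)).ncard +
              (edgesWithin G (U i ∩ (U j)ᶜ)).ncard * (edgesWithin G ((U i)ᶜ ∩ U j)).ncard : ℚ)
          else 0) := by
      intro i j
      split <;> ring
    rw [Finset.sum_congr rfl fun i _ => Finset.sum_congr rfl fun j _ => hfac i j]
    rw [Finset.sum_congr rfl fun i _ => (Finset.mul_sum _ _ _).symm, ← Finset.mul_sum]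
    ring
  -- sum the pointwise identity
  have hkey : (∑ e : G.edgeSet, ∑ f : G.edgeSet, (G.lineGraph.dist e f : ℚ) ^ 2)
      - 3 * (∑ e : G.edgeSet, ∑ f : G.edgeSet, (G.lineGraph.dist e f : ℚ))
      = 4 * (∑ i : Fin d, ∑ j : Fin d, if i < j then
          ((edgesWithin G (U i ∩ U j)).ncard * (edgesWithin G ((U i)ᶜ ∩ (U j)ᶜ)).ncard +
            (edgesWithin G (U i ∩ (U j)ᶜ)).ncard * (edgesWithin G ((U i)ᶜ ∩ U j)).ncard : ℚ)
        else 0)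
        + 2 * (Fintype.card G.edgeSet : ℚ) - 2 * (Fintype.card G.edgeSet : ℚ) ^ 2 := by
    have hLHS : (∑ e : G.edgeSet, ∑ f : G.edgeSet, (G.lineGraph.dist e f : ℚ) ^ 2)
        - 3 * (∑ e : G.edgeSet, ∑ f : G.edgeSet, (G.lineGraph.dist e f : ℚ))
        = ∑ e : G.edgeSet, ∑ f : G.edgeSet,
            ((G.lineGraph.dist e f : ℚ) ^ 2 - 3 * (G.lineGraph.dist e f : ℚ)) := by
      simp only [Finset.mul_sum, ← Finset.sum_sub_distrib]
    rw [hLHS]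
    rw [Finset.sum_congr rfl fun e _ => Finset.sum_congr rfl fun f _ => hpt e f]
    have hsplit : ∑ e : G.edgeSet, ∑ f : G.edgeSet,
        (((∑ i : Fin d, χ i e f) ^ 2 - ∑ i : Fin d, χ i e f)
          + (2 * ind (e = f) - 2))
        = (∑ e : G.edgeSet, ∑ f : G.edgeSet,
            ((∑ i : Fin d, χ i e f) ^ 2 - ∑ i : Fin d, χ i e f))
          + ∑ e : G.edgeSet, ∑ f : G.edgeSet, (2 * ind (e = f) - 2) := by
      rw [← Finset.sum_add_distrib]
      exact Finset.sum_congr rfl fun e _ => Finset.sum_add_distrib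
    rw [hsplit, hS1]
    have hsecond : ∑ e : G.edgeSet, ∑ f : G.edgeSet, (2 * ind (e = f) - 2)
        = 2 * (Fintype.card G.edgeSet : ℚ) - 2 * (Fintype.card G.edgeSet : ℚ) ^ 2 := by
      have h1 : ∀ e : G.edgeSet, (∑ f : G.edgeSet, (2 * ind (e = f) - 2))
          = 2 - 2 * (Fintype.card G.edgeSet : ℚ) := by
        intro e
        rw [Finset.sum_sub_distrib, ← Finset.mul_sum, hdiag1 e]
        simp [Finset.card_univ]
        ring
      rw [Finset.sum_congr rfl fun e _ => h1 e]
      simp [Finset.card_univ]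
      ring
    rw [hsecond]
    ring
  -- finish
  have hch : ((Nat.choose (Fintype.card G.edgeSet) 2 : ℕ) : ℚ)
      = (Fintype.card G.edgeSet : ℚ) * ((Fintype.card G.edgeSet : ℚ) - 1) / 2 := by
    exact_mod_cast Nat.cast_choose_two (K := ℚ) (Fintype.card G.edgeSet)
  rw [hch]
  linear_combination (1/4 : ℚ) * hkey
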